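/- Let V = {1,…,8} and E = {(1,2), (2,3), (3,4), (1,5), (2,6), (3,7), (4,8), (5,6), (6,7), (7,8)}, with R = {1,2,3,4} and C = {5,6,7,8}. Then the model set M(E) is not identifiable from (R, C): there exist G₀ ≠ G₁ in M(E) with (T(G₀)) c r = (T(G₁)) c r for all c ∈ C, r ∈ R. -/

import Mathlib

open Matrix

/-- The model set `M(E)`: matrices `G` over `RatFunc ℝ` whose sparsity pattern matches the
edge set `E` (i.e. `G j i ≠ 0 ↔ (i,j) ∈ E`) and such that `I - G` is invertible. -/
def ModelSet {V : Type*} [Fintype V] [DecidableEq V] (E : Finset (V × V)) :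
    Set (Matrix V V (RatFunc ℝ)) :=
  {G | (∀ i j : V, G j i ≠ 0 ↔ (i, j) ∈ E) ∧ IsUnit (1 - G)}

/-- The network response matrix `T(G) = (I - G)⁻¹`. -/
noncomputable def netT {V : Type*} [Fintype V] [DecidableEq V]
    (G : Matrix V V (RatFunc ℝ)) : Matrix V V (RatFunc ℝ) := (1 - G)⁻¹

/-- Identifiability of the model set `M(E)` from excited vertices `R` and measured
vertices `C`. -/
def Identifiable {V : Type*} [Fintype V] [DecidableEq V]
    (E : Finset (V × V)) (R C : Finset V) : Prop :=
  ∀ G₀ ∈ ModelSet E, ∀ G₁ ∈ ModelSet E,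
    (∀ c ∈ C, ∀ r ∈ R, netT G₁ c r = netT G₀ c r) → G₁ = G₀

def G0z : Matrix (Fin 8) (Fin 8) ℤ :=
  !![0,0,0,0,0,0,0,0;
     1,0,0,0,0,0,0,0;
     0,1,0,0,0,0,0,0;
     0,0,1,0,0,0,0,0;
     1,0,0,0,0,0,0,0;
     0,1,0,0,2,0,0,0;
     0,0,1,0,0,2,0,0;
     0,0,0,1,0,0,2,0]

def T0z : Matrix (Fin 8) (Fin 8) ℤ :=
  !![1,0,0,0,0,0,0,0;
     1,1,0,0,0,0,0,0;
     1,1,1,0,0,0,0,0;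
     1,1,1,1,0,0,0,0;
     1,0,0,0,1,0,0,0;
     3,1,0,0,2,1,0,0;
     7,3,1,0,4,2,1,0;
     15,7,3,1,8,4,2,1]

def G1z : Matrix (Fin 8) (Fin 8) ℤ :=
  !![0,0,0,0,0,0,0,0;
     2,0,0,0,0,0,0,0;
     0,2,0,0,0,0,0,0;
     0,0,2,0,0,0,0,0;
     1,0,0,0,0,0,0,0;
     0,1,0,0,1,0,0,0;
     0,0,1,0,0,1,0,0;
     0,0,0,1,0,0,1,0]

def T1z : Matrix (Fin 8) (Fin 8) ℤ :=
  !![1,0,0,0,0,0,0,0;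
     2,1,0,0,0,0,0,0;
     4,2,1,0,0,0,0,0;
     8,4,2,1,0,0,0,0;
     1,0,0,0,1,0,0,0;
     3,1,0,0,1,1,0,0;
     7,3,1,0,1,1,1,0;
     15,7,3,1,1,1,1,1]

theorem mulz0 : (1 - G0z) * T0z = 1 := Matrix.ext (fun i j => by fin_cases i <;> fin_cases j <;> decide)
theorem mulz1 : (1 - G1z) * T1z = 1 := Matrix.ext (fun i j => by fin_cases i <;> fin_cases j <;> decide)

noncomputable def fh : ℤ →+* RatFunc ℝ := Int.castRingHom (RatFunc ℝ)

noncomputable def myG0 : Matrix (Fin 8) (Fin 8) (RatFunc ℝ) := fh.mapMatrix G0z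
noncomputable def myT0 : Matrix (Fin 8) (Fin 8) (RatFunc ℝ) := fh.mapMatrix T0z
noncomputable def myG1 : Matrix (Fin 8) (Fin 8) (RatFunc ℝ) := fh.mapMatrix G1z
noncomputable def myT1 : Matrix (Fin 8) (Fin 8) (RatFunc ℝ) := fh.mapMatrix T1z

instance : CharZero (RatFunc ℝ) :=
  charZero_of_injective_algebraMap (algebraMap ℝ (RatFunc ℝ)).injective

theorem mul0 : (1 - myG0) * myT0 = 1 := by
  have h := congrArg (fh.mapMatrix : Matrix (Fin 8) (Fin 8) ℤ →+* _) mulz0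
  rw [_root_.map_mul, _root_.map_sub, _root_.map_one] at h
  exact h

theorem mul1 : (1 - myG1) * myT1 = 1 := by
  have h := congrArg (fh.mapMatrix : Matrix (Fin 8) (Fin 8) ℤ →+* _) mulz1
  rw [_root_.map_mul, _root_.map_sub, _root_.map_one] at h
  exact h

theorem netT0 : netT myG0 = myT0 := Matrix.inv_eq_right_inv mul0
theorem netT1 : netT myG1 = myT1 := Matrix.inv_eq_right_inv mul1

/-- The eight-vertex network of Example 2 (vertices `0,…,7` standing for `1,…,8`, with
edges `(1,2), (2,3), (3,4), (1,5), (2,6), (3,7), (4,8), (5,6), (6,7), (7,8)`, excited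
vertices `R = {1,2,3,4}` and measured vertices `C = {5,6,7,8}`) is not identifiable: there
are two distinct models in `M(E)` with the same response submatrix `T_{C,R}`. -/
theorem stmt_19
    (E : Finset (Fin 8 × Fin 8))
    (hE : E = {(0, 1), (1, 2), (2, 3), (0, 4), (1, 5), (2, 6), (3, 7), (4, 5), (5, 6), (6, 7)})
    (R C : Finset (Fin 8)) (hR : R = {0, 1, 2, 3}) (hC : C = {4, 5, 6, 7}) :
    ¬ Identifiable E R C ∧
      ∃ G₀ ∈ ModelSet E, ∃ G₁ ∈ ModelSet E, G₀ ≠ G₁ ∧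
        ∀ c ∈ C, ∀ r ∈ R, netT G₀ c r = netT G₁ c r := by
  subst hE hR hC
  have hcast : ∀ (M : Matrix (Fin 8) (Fin 8) ℤ) (i j : Fin 8),
      fh.mapMatrix M i j = ((M i j : ℤ) : RatFunc ℝ) := by
    intro M i j; simp [RingHom.mapMatrix_apply, Matrix.map_apply, fh]
  have hpat0 : ∀ i j : Fin 8, myG0 j i ≠ 0 ↔
      (i, j) ∈ ({(0, 1), (1, 2), (2, 3), (0, 4), (1, 5), (2, 6), (3, 7), (4, 5), (5, 6), (6, 7)} :
        Finset (Fin 8 × Fin 8)) := by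
    intro i j
    rw [myG0, hcast, Int.cast_ne_zero]
    revert i j; decide
  have hpat1 : ∀ i j : Fin 8, myG1 j i ≠ 0 ↔
      (i, j) ∈ ({(0, 1), (1, 2), (2, 3), (0, 4), (1, 5), (2, 6), (3, 7), (4, 5), (5, 6), (6, 7)} :
        Finset (Fin 8 × Fin 8)) := by
    intro i j
    rw [myG1, hcast, Int.cast_ne_zero]
    revert i j; decide
  have hm0 : myG0 ∈ ModelSet
      ({(0, 1), (1, 2), (2, 3), (0, 4), (1, 5), (2, 6), (3, 7), (4, 5), (5, 6), (6, 7)} :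
        Finset (Fin 8 × Fin 8)) :=
    ⟨hpat0, (Matrix.isUnit_iff_isUnit_det _).2 (Matrix.isUnit_det_of_right_inverse mul0)⟩
  have hm1 : myG1 ∈ ModelSet
      ({(0, 1), (1, 2), (2, 3), (0, 4), (1, 5), (2, 6), (3, 7), (4, 5), (5, 6), (6, 7)} :
        Finset (Fin 8 × Fin 8)) :=
    ⟨hpat1, (Matrix.isUnit_iff_isUnit_det _).2 (Matrix.isUnit_det_of_right_inverse mul1)⟩
  have hne : myG0 ≠ myG1 := by
    intro h
    have h2 := congrFun (congrFun h 1) 0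
    rw [myG0, myG1, hcast, hcast] at h2
    have := Int.cast_injective (α := RatFunc ℝ) h2
    revert this; decide
  have hTz : ∀ c ∈ ({4, 5, 6, 7} : Finset (Fin 8)), ∀ r ∈ ({0, 1, 2, 3} : Finset (Fin 8)),
      T0z c r = T1z c r := by
    intro c hc r hr
    simp only [Finset.mem_insert, Finset.mem_singleton] at hc hr
    rcases hc with rfl | rfl | rfl | rfl <;> rcases hr with rfl | rfl | rfl | rfl <;> decide
  have hT : ∀ c ∈ ({4, 5, 6, 7} : Finset (Fin 8)), ∀ r ∈ ({0, 1, 2, 3} : Finset (Fin 8)),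
      netT myG0 c r = netT myG1 c r := by
    intro c hc r hr
    rw [netT0, netT1, myT0, myT1, hcast, hcast, hTz c hc r hr]
  refine ⟨?_, myG0, hm0, myG1, hm1, hne, hT⟩
  intro hid
  exact hne (hid myG1 hm1 myG0 hm0 (fun c hc r hr => hT c hc r hr) )
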